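/- Let A be an inverse cyclic full matrix. Every entry of A in the strict upper triangle is determined by the diagonal and super-diagonal entries via a_{ij} = (a_{i,i+1}a_{i+1,i+2}⋯a_{j-1,j})/(a_{i+1,i+1}a_{i+2,i+2}⋯a_{j-1,j-1}) for i+1 < j. -/

import Mathlib

open Matrix Finset
open Fin.NatCast

/-- A matrix (of order ≥ 2) has the *inverse cyclic property* if all its diagonal
entries are nonzero and the three cyclic entry conditions hold. -/
def InvCyclic {n : ℕ} (A : Matrix (Fin (n + 2)) (Fin (n + 2)) ℝ) : Prop :=
  (∀ i, A i i ≠ 0) ∧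
  (∀ i k j : Fin (n + 2), i < k → k < j → A i j = A i k * A k j / A k k) ∧
  (∀ i j : Fin (n + 2), j < i → i ≠ Fin.last (n + 1) →
    A i j = A i (Fin.last (n + 1)) * A (Fin.last (n + 1)) j /
      A (Fin.last (n + 1)) (Fin.last (n + 1))) ∧
  (∀ j : Fin (n + 2), j < Fin.last (n + 1) →
    A (Fin.last (n + 1)) j = A (Fin.last (n + 1)) 0 * A 0 j / A 0 0)

/-- `d`, the product of the diagonal entries. -/
def diagProd {n : ℕ} (A : Matrix (Fin (n + 2)) (Fin (n + 2)) ℝ) : ℝ := ∏ i, A i i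

/-- `c`, the cyclic product `a₁₂a₂₃⋯a_{(n-1)n}a_{n1}`. -/
def cycProd {n : ℕ} (A : Matrix (Fin (n + 2)) (Fin (n + 2)) ℝ) : ℝ :=
  ∏ i : Fin (n + 2), A i (i + 1)

theorem stmt14 {n : ℕ} (A : Matrix (Fin (n + 2)) (Fin (n + 2)) ℝ)
    (hfull : ∀ i j, A i j ≠ 0) (hic : InvCyclic A) :
    ∀ i j : Fin (n + 2), (i : ℕ) + 1 < (j : ℕ) →
      A i j = (∏ t ∈ Finset.Ico (i : ℕ) (j : ℕ),
          A (t : Fin (n + 2)) ((t + 1 : ℕ) : Fin (n + 2))) /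
        (∏ t ∈ Finset.Ico ((i : ℕ) + 1) (j : ℕ), A (t : Fin (n + 2)) (t : Fin (n + 2))) := by
  obtain ⟨hdiag, hcyc, -, -⟩ := hic
  suffices H : ∀ d : ℕ, ∀ i j : Fin (n+2), (j:ℕ) = (i:ℕ) + 1 + d →
      A i j = (∏ t ∈ Finset.Ico (i : ℕ) (j : ℕ),
          A (t : Fin (n + 2)) ((t + 1 : ℕ) : Fin (n + 2))) /
        (∏ t ∈ Finset.Ico ((i : ℕ) + 1) (j : ℕ), A (t : Fin (n + 2)) (t : Fin (n + 2))) by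
    intro i j hij
    exact H ((j:ℕ) - (i:ℕ) - 1) i j (by omega)
  intro d
  induction d with
  | zero =>
    intro i j hj
    have hjn : (j:ℕ) < n + 2 := j.isLt
    have h1 : Finset.Ico (i:ℕ) (j:ℕ) = {(i:ℕ)} := by
      rw [hj]; simp
    have h2 : Finset.Ico ((i:ℕ)+1) (j:ℕ) = ∅ := by
      rw [hj]; simp
    rw [h1, h2]
    simp only [Finset.prod_singleton, Finset.prod_empty, div_one]
    rw [Fin.cast_val_eq_self]
    congr 1
    ext
    rw [Fin.val_cast_of_lt (by omega)]
    omega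
  | succ d ih =>
    intro i j hj
    have hjn : (j:ℕ) < n + 2 := j.isLt
    have hklt : (i:ℕ)+1 < n+2 := by omega
    set k : Fin (n+2) := ⟨(i:ℕ)+1, hklt⟩ with hk
    have hik : i < k := by simp [Fin.lt_def, hk]
    have hkj : k < j := by simp [Fin.lt_def, hk]; omega
    have hrec := ih k j (by simp [hk]; omega)
    have hkval : (k:ℕ) = (i:ℕ)+1 := rfl
    rw [hcyc i k j hik hkj, hrec, hkval]
    have hnum : (∏ t ∈ Finset.Ico (i:ℕ) (j:ℕ), A (t : Fin (n+2)) ((t+1 : ℕ) : Fin (n+2)))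
        = A ((i:ℕ) : Fin (n+2)) (((i:ℕ)+1 : ℕ) : Fin (n+2)) *
          ∏ t ∈ Finset.Ico ((i:ℕ)+1) (j:ℕ), A (t : Fin (n+2)) ((t+1 : ℕ) : Fin (n+2)) := by
      rw [Finset.prod_eq_prod_Ico_succ_bot (by omega)]
    have hden : (∏ t ∈ Finset.Ico ((i:ℕ)+1) (j:ℕ), A (t : Fin (n+2)) (t : Fin (n+2)))
        = A (((i:ℕ)+1 : ℕ) : Fin (n+2)) (((i:ℕ)+1 : ℕ) : Fin (n+2)) *
          ∏ t ∈ Finset.Ico ((i:ℕ)+2) (j:ℕ), A (t : Fin (n+2)) (t : Fin (n+2)) := by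
      rw [Finset.prod_eq_prod_Ico_succ_bot (by omega)]
    have hki : k = (((i:ℕ)+1 : ℕ) : Fin (n+2)) := by
      ext
      rw [Fin.val_cast_of_lt hklt]
    have hii : ((i:ℕ) : Fin (n+2)) = i := Fin.cast_val_eq_self i
    rw [hnum, hden, hii, ← hki]
    have h0 : A k k ≠ 0 := hdiag k
    have h1 : (∏ t ∈ Finset.Ico ((i:ℕ)+2) (j:ℕ), A (t : Fin (n+2)) (t : Fin (n+2))) ≠ 0 :=
      Finset.prod_ne_zero_iff.2 fun t _ => hdiag _
    field_simp
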